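/- For any prime p, the matrices B = [[0,1],[-1,0]] and U_p = [[p,0],[0,1/p]] satisfy B = A^{-1} Q^p A^{-1} and U_p = B^{-1} Q A^{-p} Q, where A = [[1,0],[1,1]] and Q = [[1,1/p],[0,1]]. Consequently the group generated by A and Q is all of SL_2(Z[1/p]). -/

import Mathlib

abbrev SL2Q := Matrix.SpecialLinearGroup (Fin 2) ℚ

/-- A = [[1,0],[1,1]] -/
def matA : SL2Q := ⟨!![1,0;1,1], by norm_num [Matrix.det_fin_two_of]⟩
/-- B = [[0,1],[-1,0]] -/
def matB : SL2Q := ⟨!![0,1;-1,0], by norm_num [Matrix.det_fin_two_of]⟩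
/-- Q_q = [[1,q],[0,1]] -/
def matQ (q : ℚ) : SL2Q := ⟨!![1,q;0,1], by norm_num [Matrix.det_fin_two_of]⟩
/-- U_p = [[p,0],[0,1/p]] -/
def matU (p : ℚ) (hp : p ≠ 0) : SL2Q := ⟨!![p,0;0,p⁻¹], by rw [Matrix.det_fin_two_of]; field_simp; norm_num⟩
/-- lower unipotent [[1,0],[x,1]] -/
def matL (x : ℚ) : SL2Q := ⟨!![1,0;x,1], by norm_num [Matrix.det_fin_two_of]⟩

lemma matQ_mul (x y : ℚ) : matQ x * matQ y = matQ (x+y) := by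
  apply Subtype.ext; simp only [Matrix.SpecialLinearGroup.coe_mul]; simp [matQ, Matrix.mul_fin_two]; try ring_nf

lemma matL_mul (x y : ℚ) : matL x * matL y = matL (x+y) := by
  apply Subtype.ext; simp only [Matrix.SpecialLinearGroup.coe_mul]; simp [matL, Matrix.mul_fin_two]; try ring_nf

lemma matQ_zero : matQ 0 = 1 := by
  apply Subtype.ext; simp [matQ, Matrix.one_fin_two]

lemma matL_zero : matL 0 = 1 := by
  apply Subtype.ext; simp [matL, Matrix.one_fin_two]

lemma matQ_inv (x : ℚ) : (matQ x)⁻¹ = matQ (-x) := by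
  apply inv_eq_of_mul_eq_one_right; rw [matQ_mul]; simp [matQ_zero]

lemma matL_inv (x : ℚ) : (matL x)⁻¹ = matL (-x) := by
  apply inv_eq_of_mul_eq_one_right; rw [matL_mul]; simp [matL_zero]

lemma matQ_pow (x : ℚ) (n : ℕ) : (matQ x)^n = matQ (n*x) := by
  induction n with
  | zero => simp [matQ_zero]
  | succ n ih => rw [pow_succ, ih, matQ_mul]; push_cast; ring_nf

lemma matL_pow (x : ℚ) (n : ℕ) : (matL x)^n = matL (n*x) := by
  induction n with
  | zero => simp [matL_zero]
  | succ n ih => rw [pow_succ, ih, matL_mul]; push_cast; ring_nf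

lemma matQ_zpow (x : ℚ) (k : ℤ) : (matQ x)^k = matQ (k*x) := by
  cases k with
  | ofNat n => rw [Int.ofNat_eq_coe, zpow_natCast, matQ_pow]; norm_num
  | negSucc n => rw [zpow_negSucc, matQ_pow, matQ_inv]; congr 1; push_cast; ring

lemma matL_zpow (x : ℚ) (k : ℤ) : (matL x)^k = matL (k*x) := by
  cases k with
  | ofNat n => rw [Int.ofNat_eq_coe, zpow_natCast, matL_pow]; norm_num
  | negSucc n => rw [zpow_negSucc, matL_pow, matL_inv]; congr 1; push_cast; ring

lemma matA_eq : matA = matL 1 := by apply Subtype.ext; simp [matA, matL]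

lemma matA_zpow (k : ℤ) : matA^k = matL k := by rw [matA_eq, matL_zpow, mul_one]

lemma matB_inv : matB⁻¹ = ⟨!![0,-1;1,0], by norm_num [Matrix.det_fin_two_of]⟩ := by
  apply inv_eq_of_mul_eq_one_right
  apply Subtype.ext; erw [Matrix.SpecialLinearGroup.coe_mul]; simp [matB, Matrix.mul_fin_two, Matrix.one_fin_two]

lemma matU_mul (a b : ℚ) (ha : a ≠ 0) (hb : b ≠ 0) :
    matU a ha * matU b hb = matU (a*b) (mul_ne_zero ha hb) := by
  apply Subtype.ext; simp only [Matrix.SpecialLinearGroup.coe_mul]; simp [matU, Matrix.mul_fin_two]; ring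

lemma matU_one : matU 1 one_ne_zero = 1 := by
  apply Subtype.ext; simp [matU, Matrix.one_fin_two]

lemma matU_inv (a : ℚ) (ha : a ≠ 0) : (matU a ha)⁻¹ = matU a⁻¹ (inv_ne_zero ha) := by
  apply inv_eq_of_mul_eq_one_right; rw [matU_mul]
  apply Subtype.ext
  simp [matU, mul_inv_cancel₀ ha, Matrix.one_fin_two, inv_inv]

lemma matU_zpow (a : ℚ) (ha : a ≠ 0) (k : ℤ) :
    (matU a ha)^k = matU (a^k) (zpow_ne_zero k ha) := by
  induction k using Int.induction_on with
  | zero =>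
      rw [zpow_zero]
      apply Subtype.ext; simp [matU, Matrix.one_fin_two]
  | succ n ih =>
      rw [zpow_add_one, ih, matU_mul]
      apply Subtype.ext
      simp [matU, zpow_add_one₀ ha]
  | pred n ih =>
      rw [zpow_sub_one, ih, matU_inv, matU_mul]
      apply Subtype.ext
      simp [matU, zpow_sub_one₀ ha, div_eq_mul_inv]
section Ids
variable (p : ℕ) (hp : p.Prime)

lemma hp0 (hp : p.Prime) : ((p:ℚ)) ≠ 0 := Nat.cast_ne_zero.mpr hp.ne_zero

lemma matA_inv : matA⁻¹ = matL (-1) := by rw [matA_eq, matL_inv]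

lemma id1 (hp : p.Prime) : matB = matA⁻¹ * (matQ (1/(p:ℚ)))^p * matA⁻¹ := by
  rw [matA_inv, matQ_pow]
  rw [show (p:ℚ) * (1/(p:ℚ)) = 1 by rw [mul_one_div, div_self (hp0 p hp)]]
  apply Subtype.ext
  simp only [Matrix.SpecialLinearGroup.coe_mul]; simp [matB, matL, matQ, Matrix.mul_fin_two]

lemma id2 (hp : p.Prime) : matU (p:ℚ) (Nat.cast_ne_zero.mpr hp.ne_zero) =
    matB⁻¹ * matQ (1/(p:ℚ)) * matA^(-(p:ℤ)) * matQ (1/(p:ℚ)) := by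
  rw [matB_inv, matA_zpow]
  rw [show ((-(p:ℤ) : ℤ) : ℚ) = -(p:ℚ) by push_cast; ring]
  apply Subtype.ext
  have h := hp0 p hp
  simp only [Matrix.SpecialLinearGroup.coe_mul]; erw [Matrix.SpecialLinearGroup.coe_mul]; simp [matU, matB, matL, matQ, Matrix.mul_fin_two, mul_inv_cancel₀ h,
    inv_mul_cancel₀ h]
end Ids

def Pden (p : ℕ) (x : ℚ) : Prop := ∃ a : ℤ, ∃ n : ℕ, x = (a:ℚ) / (p:ℚ)^n

section PdenLemmas
variable {p : ℕ}

lemma Pden_int (z : ℤ) : Pden p (z:ℚ) := ⟨z, 0, by simp⟩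

lemma Pden_neg {x : ℚ} (h : Pden p x) : Pden p (-x) := by
  obtain ⟨a, n, rfl⟩ := h; exact ⟨-a, n, by push_cast; ring⟩

lemma Pden_add (hp : p.Prime) {x y : ℚ} (hx : Pden p x) (hy : Pden p y) : Pden p (x+y) := by
  obtain ⟨a, n, rfl⟩ := hx; obtain ⟨b, m, rfl⟩ := hy
  refine ⟨a * p^m + b * p^n, n + m, ?_⟩
  have h := hp0 p hp
  rw [div_add_div _ _ (pow_ne_zero n h) (pow_ne_zero m h), pow_add]
  push_cast
  ring_nf

lemma Pden_mul (hp : p.Prime) {x y : ℚ} (hx : Pden p x) (hy : Pden p y) : Pden p (x*y) := by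
  obtain ⟨a, n, rfl⟩ := hx; obtain ⟨b, m, rfl⟩ := hy
  refine ⟨a * b, n + m, ?_⟩
  push_cast
  rw [pow_add]
  ring

lemma Pden_den (hp : p.Prime) {x : ℚ} (h : Pden p x) : ∃ n : ℕ, (x.den : ℤ) = (p:ℤ)^n := by
  obtain ⟨a, n, rfl⟩ := h
  have hcast : ((a:ℚ) / (p:ℚ)^n) = ((a : ℤ) : ℚ) / (((p:ℤ)^n : ℤ) : ℚ) := by push_cast; ring
  have hdvd : ((((a:ℚ) / (p:ℚ)^n).den : ℤ)) ∣ (p:ℤ)^n := by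
    rw [hcast, ← Rat.divInt_eq_div]
    exact Rat.den_dvd a ((p:ℤ)^n)
  have hdvd' : ((a:ℚ) / (p:ℚ)^n).den ∣ p^n := by
    have := Int.natAbs_dvd_natAbs.mpr hdvd
    simpa [Int.natAbs_pow] using this
  obtain ⟨m, _, hm⟩ := (Nat.dvd_prime_pow hp).mp hdvd'
  exact ⟨m, by rw [hm]; push_cast; ring⟩

lemma num_div_natAbs_le (z d : ℤ) (hd : d ≠ 0) :
    ((z:ℚ)/(d:ℚ)).num.natAbs ≤ z.natAbs := by
  rcases eq_or_ne z 0 with rfl | hz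
  · simp
  · have hdvd : ((z:ℚ)/(d:ℚ)).num ∣ z := by
      rw [← Rat.divInt_eq_div]; exact Rat.num_dvd z hd
    exact Nat.le_of_dvd (Int.natAbs_pos.mpr hz) (Int.natAbs_dvd_natAbs.mpr hdvd)

lemma euclid (hp : p.Prime) (a c : ℚ) (ha : Pden p a) (hc : Pden p c) (hc0 : c ≠ 0) :
    ∃ q : ℚ, Pden p q ∧ (a + q * c).num.natAbs < c.num.natAbs := by
  obtain ⟨s, hs⟩ := Pden_den hp ha
  obtain ⟨m, hm⟩ := Pden_den hp hc
  have hq0 := hp0 p hp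
  set x : ℤ := a.num * (p:ℤ)^m with hx
  set t : ℤ := -(x / c.num) with ht
  set r : ℤ := x % c.num with hr
  have hcnum : c.num ≠ 0 := Rat.num_ne_zero.mpr hc0
  have hrint : (r:ℤ) = x + t * c.num := by
    have h0 := Int.mul_ediv_add_emod x c.num
    rw [hr, ht]
    linarith [h0, mul_comm c.num (x / c.num)]
  refine ⟨(t:ℚ)/(p:ℚ)^s, ⟨t, s, rfl⟩, ?_⟩
  have hden_a : (a.den : ℚ) = (p:ℚ)^s := by
    rw [show ((a.den:ℚ)) = ((a.den:ℤ):ℚ) by push_cast; ring, hs]; push_cast; ring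
  have hden_c : (c.den : ℚ) = (p:ℚ)^m := by
    rw [show ((c.den:ℚ)) = ((c.den:ℤ):ℚ) by push_cast; ring, hm]; push_cast; ring
  have key : a + (t:ℚ)/(p:ℚ)^s * c = (r:ℚ)/(p:ℚ)^(s+m) := by
    conv_lhs => rw [← Rat.num_div_den a, ← Rat.num_div_den c, hden_a, hden_c]
    have h1 : (p:ℚ)^s ≠ 0 := pow_ne_zero _ hq0
    have h2 : (p:ℚ)^m ≠ 0 := pow_ne_zero _ hq0
    field_simp
    rw [pow_add]
    push_cast [hrint, hx]
    ring
  rw [key]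
  have h1 : ((r:ℚ)/(p:ℚ)^(s+m)).num.natAbs ≤ r.natAbs := by
    have := num_div_natAbs_le r ((p:ℤ)^(s+m)) (pow_ne_zero _ (by exact_mod_cast hp.ne_zero))
    rw [show (((p:ℤ)^(s+m) : ℤ) : ℚ) = (p:ℚ)^(s+m) by push_cast; ring] at this
    exact this
  have h2 : r.natAbs < c.num.natAbs := by
    have hnn : 0 ≤ r := Int.emod_nonneg x hcnum
    have hlt : r < |c.num| := Int.emod_lt_abs x hcnum
    rw [Int.abs_eq_natAbs] at hlt
    omega
  omega

lemma Pden_unit (hp : p.Prime) {a : ℚ} (ha0 : a ≠ 0) (h1 : Pden p a) (h2 : Pden p a⁻¹) :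
    ∃ k : ℤ, a = (p:ℚ)^k ∨ a = -((p:ℚ)^k) := by
  have hq0 := hp0 p hp
  obtain ⟨m, hm⟩ := Pden_den hp h1
  obtain ⟨l, hl⟩ := Pden_den hp h2
  have hden_a : (a.den : ℚ) = (p:ℚ)^m := by
    rw [show ((a.den:ℚ)) = ((a.den:ℤ):ℚ) by push_cast; ring, hm]; push_cast; ring
  have hden_ai : ((a⁻¹).den : ℚ) = (p:ℚ)^l := by
    rw [show (((a⁻¹).den:ℚ)) = (((a⁻¹).den:ℤ):ℚ) by push_cast; ring, hl]; push_cast; ring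
  have hnum_a : (a.num : ℚ) = a * (p:ℚ)^m := by
    rw [← hden_a]; exact_mod_cast (Rat.mul_den_eq_num a).symm
  have hnum_ai : ((a⁻¹).num : ℚ) = a⁻¹ * (p:ℚ)^l := by
    rw [← hden_ai]; exact_mod_cast (Rat.mul_den_eq_num a⁻¹).symm
  have hprod : (a.num * (a⁻¹).num : ℤ) = (p:ℤ)^(m+l) := by
    have : ((a.num * (a⁻¹).num : ℤ) : ℚ) = (((p:ℤ)^(m+l) : ℤ) : ℚ) := by
      push_cast [hnum_a, hnum_ai, pow_add]
      field_simp
    exact_mod_cast this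
  have hdvd : a.num.natAbs ∣ p^(m+l) := by
    have hdi : a.num ∣ (p:ℤ)^(m+l) := ⟨(a⁻¹).num, hprod.symm⟩
    have := Int.natAbs_dvd_natAbs.mpr hdi
    simpa [Int.natAbs_pow] using this
  obtain ⟨j, _, hj⟩ := (Nat.dvd_prime_pow hp).mp hdvd
  refine ⟨(j:ℤ) - (m:ℤ), ?_⟩
  have haval : a = (a.num : ℚ) / (p:ℚ)^m := by
    conv_lhs => rw [← Rat.num_div_den a, hden_a]
  rcases Int.natAbs_eq a.num with he | he
  · left
    rw [haval, he, hj]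
    push_cast
    rw [zpow_sub₀ hq0, zpow_natCast, zpow_natCast]
  · right
    rw [haval, he, hj]
    push_cast
    rw [zpow_sub₀ hq0, zpow_natCast, zpow_natCast]
    ring

end PdenLemmas

section Closure
variable (p : ℕ)

def Hgrp (p : ℕ) : Subgroup SL2Q := Subgroup.closure {matA, matQ (1/(p:ℚ))}

lemma hA_mem : matA ∈ Hgrp p := Subgroup.subset_closure (by simp)
lemma hQp_mem : matQ (1/(p:ℚ)) ∈ Hgrp p := Subgroup.subset_closure (by simp)

lemma hB_mem (hp : p.Prime) : matB ∈ Hgrp p := by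
  rw [id1 p hp]
  exact mul_mem (mul_mem (inv_mem (hA_mem p)) (pow_mem (hQp_mem p) p)) (inv_mem (hA_mem p))

lemma hU_mem (hp : p.Prime) : matU (p:ℚ) (Nat.cast_ne_zero.mpr hp.ne_zero) ∈ Hgrp p := by
  rw [id2 p hp]
  exact mul_mem (mul_mem (mul_mem (inv_mem (hB_mem p hp)) (hQp_mem p))
    (zpow_mem (hA_mem p) _)) (hQp_mem p)

lemma matU_conj_matQ (hp : p.Prime) (x : ℚ) :
    (matU (p:ℚ) (Nat.cast_ne_zero.mpr hp.ne_zero))⁻¹ * matQ x *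
      matU (p:ℚ) (Nat.cast_ne_zero.mpr hp.ne_zero) = matQ (x / (p:ℚ)^2) := by
  have h := hp0 p hp
  rw [matU_inv]
  apply Subtype.ext
  simp only [Matrix.SpecialLinearGroup.coe_mul]; simp [matU, matQ, Matrix.mul_fin_two, inv_mul_cancel₀ h, mul_inv_cancel₀ h]
  field_simp

lemma hQpow_mem (hp : p.Prime) : ∀ n : ℕ, matQ (1/(p:ℚ)^n) ∈ Hgrp p := by
  have h := hp0 p hp
  intro n
  induction n with
  | zero =>
      have : matQ (1/(p:ℚ)^0) = (matQ (1/(p:ℚ)))^p := by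
        rw [matQ_pow]; congr 1; field_simp
      rw [this]; exact pow_mem (hQp_mem p) p
  | succ n ih =>
      have h2 : matQ (1/(p:ℚ)^n / (p:ℚ)^2) ∈ Hgrp p := by
        rw [← matU_conj_matQ p hp]
        exact mul_mem (mul_mem (inv_mem (hU_mem p hp)) ih) (hU_mem p hp)
      have : matQ (1/(p:ℚ)^(n+1)) = (matQ (1/(p:ℚ)^n / (p:ℚ)^2))^p := by
        rw [matQ_pow]; congr 1; field_simp; ring
      rw [this]; exact pow_mem h2 p

lemma hQall_mem (hp : p.Prime) {x : ℚ} (hx : Pden p x) : matQ x ∈ Hgrp p := by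
  obtain ⟨a, n, rfl⟩ := hx
  have : matQ ((a:ℚ)/(p:ℚ)^n) = (matQ (1/(p:ℚ)^n))^(a:ℤ) := by
    rw [matQ_zpow]; congr 1; push_cast; ring
  rw [this]
  exact zpow_mem (hQpow_mem p hp n) a

lemma matL_eq_conj (x : ℚ) : matL x = matB * matQ (-x) * matB⁻¹ := by
  rw [matB_inv]
  apply Subtype.ext
  erw [Matrix.SpecialLinearGroup.coe_mul, Matrix.SpecialLinearGroup.coe_mul]; simp [matL, matB, matQ, Matrix.mul_fin_two]

lemma hLall_mem (hp : p.Prime) {x : ℚ} (hx : Pden p x) : matL x ∈ Hgrp p := by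
  rw [matL_eq_conj]
  exact mul_mem (mul_mem (hB_mem p hp) (hQall_mem p hp (Pden_neg hx))) (inv_mem (hB_mem p hp))

end Closure

section Main
variable (p : ℕ)

lemma triangular_mem (hp : p.Prime) (M : SL2Q)
    (hden : ∀ i j, Pden p ((M : Matrix (Fin 2) (Fin 2) ℚ) i j))
    (hc : (M : Matrix (Fin 2) (Fin 2) ℚ) 1 0 = 0) : M ∈ Hgrp p := by
  have h := hp0 p hp
  have hdet : (M : Matrix (Fin 2) (Fin 2) ℚ).det = 1 := M.2
  rw [Matrix.det_fin_two, hc, mul_zero, sub_zero] at hdet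
  have ha0 : (M : Matrix (Fin 2) (Fin 2) ℚ) 0 0 ≠ 0 := by
    intro h'; rw [h', zero_mul] at hdet; exact zero_ne_one hdet
  have hdinv : (M : Matrix (Fin 2) (Fin 2) ℚ) 1 1 = ((M : Matrix (Fin 2) (Fin 2) ℚ) 0 0)⁻¹ :=
    eq_inv_of_mul_eq_one_left (by rw [mul_comm]; exact hdet)
  have hai : Pden p (((M : Matrix (Fin 2) (Fin 2) ℚ) 0 0)⁻¹) := by
    rw [← hdinv]; exact hden 1 1
  obtain ⟨k, hk | hk⟩ := Pden_unit hp ha0 (hden 0 0) hai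
  · -- a = p^k
    have hQb : matQ ((M : Matrix (Fin 2) (Fin 2) ℚ) 0 1 *
        ((M : Matrix (Fin 2) (Fin 2) ℚ) 0 0)⁻¹) ∈ Hgrp p :=
      hQall_mem p hp (Pden_mul hp (hden 0 1) hai)
    have hUk : matU ((p:ℚ)^k) (zpow_ne_zero k h) ∈ Hgrp p := by
      have := matU_zpow (p:ℚ) (Nat.cast_ne_zero.mpr hp.ne_zero) k
      rw [← this]
      exact zpow_mem (hU_mem p hp) k
    have hEq : M = matU ((p:ℚ)^k) (zpow_ne_zero k h) *
        matQ ((M : Matrix (Fin 2) (Fin 2) ℚ) 0 1 * ((M : Matrix (Fin 2) (Fin 2) ℚ) 0 0)⁻¹) := by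
      apply Subtype.ext
      rw [Matrix.SpecialLinearGroup.coe_mul]
      show (M : Matrix (Fin 2) (Fin 2) ℚ) = _
      rw [Matrix.eta_fin_two (M : Matrix (Fin 2) (Fin 2) ℚ)]
      simp only [matU, matQ, Matrix.mul_fin_two]
      rw [hc, hdinv, ← hk]
      ext i j; fin_cases i <;> fin_cases j <;> simp <;> field_simp
    rw [hEq]
    exact mul_mem hUk hQb
  · -- a = -(p^k)
    have hQb : matQ ((M : Matrix (Fin 2) (Fin 2) ℚ) 0 1 *
        ((M : Matrix (Fin 2) (Fin 2) ℚ) 0 0)⁻¹) ∈ Hgrp p :=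
      hQall_mem p hp (Pden_mul hp (hden 0 1) hai)
    have hUk : matU ((p:ℚ)^k) (zpow_ne_zero k h) ∈ Hgrp p := by
      have := matU_zpow (p:ℚ) (Nat.cast_ne_zero.mpr hp.ne_zero) k
      rw [← this]
      exact zpow_mem (hU_mem p hp) k
    have hEq : M = matB * matB * (matU ((p:ℚ)^k) (zpow_ne_zero k h) *
        matQ ((M : Matrix (Fin 2) (Fin 2) ℚ) 0 1 * ((M : Matrix (Fin 2) (Fin 2) ℚ) 0 0)⁻¹)) := by
      apply Subtype.ext
      rw [Matrix.SpecialLinearGroup.coe_mul, Matrix.SpecialLinearGroup.coe_mul,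
        Matrix.SpecialLinearGroup.coe_mul]
      show (M : Matrix (Fin 2) (Fin 2) ℚ) = _
      rw [Matrix.eta_fin_two (M : Matrix (Fin 2) (Fin 2) ℚ)]
      simp only [matU, matQ, matB, Matrix.mul_fin_two]
      rw [hc, hdinv]
      have hpk : (p:ℚ)^k = -((M : Matrix (Fin 2) (Fin 2) ℚ) 0 0) := by rw [hk]; ring
      rw [hpk]
      ext i j; fin_cases i <;> fin_cases j <;> simp <;> field_simp
    rw [hEq]
    exact mul_mem (mul_mem (hB_mem p hp) (hB_mem p hp)) (mul_mem hUk hQb)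

lemma main_mem (hp : p.Prime) : ∀ N : ℕ, ∀ M : SL2Q,
    (∀ i j, Pden p ((M : Matrix (Fin 2) (Fin 2) ℚ) i j)) →
    ((M : Matrix (Fin 2) (Fin 2) ℚ) 1 0).num.natAbs < N → M ∈ Hgrp p := by
  intro N
  induction N with
  | zero => intro M _ hlt; exact absurd hlt (Nat.not_lt_zero _)
  | succ N ih =>
    intro M hden hlt
    by_cases hc : (M : Matrix (Fin 2) (Fin 2) ℚ) 1 0 = 0
    · exact triangular_mem p hp M hden hc
    · obtain ⟨q, hq, hlt'⟩ := euclid hp ((M : Matrix (Fin 2) (Fin 2) ℚ) 0 0)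
        ((M : Matrix (Fin 2) (Fin 2) ℚ) 1 0) (hden 0 0) (hden 1 0) hc
      set M' : SL2Q := matB * (matQ q * M) with hM'
      have hcoe : (M' : Matrix (Fin 2) (Fin 2) ℚ) =
          !![(M : Matrix (Fin 2) (Fin 2) ℚ) 1 0, (M : Matrix (Fin 2) (Fin 2) ℚ) 1 1;
             -((M : Matrix (Fin 2) (Fin 2) ℚ) 0 0 + q * (M : Matrix (Fin 2) (Fin 2) ℚ) 1 0),
             -((M : Matrix (Fin 2) (Fin 2) ℚ) 0 1 + q * (M : Matrix (Fin 2) (Fin 2) ℚ) 1 1)] := by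
        rw [hM', Matrix.SpecialLinearGroup.coe_mul, Matrix.SpecialLinearGroup.coe_mul,
          Matrix.eta_fin_two (M : Matrix (Fin 2) (Fin 2) ℚ)]
        simp [matB, matQ, Matrix.mul_fin_two]
      have hden' : ∀ i j, Pden p ((M' : Matrix (Fin 2) (Fin 2) ℚ) i j) := by
        intro i j
        rw [hcoe]
        fin_cases i <;> fin_cases j <;> simp
        · exact hden 1 0
        · exact hden 1 1
        · exact Pden_add hp (Pden_neg (Pden_mul hp hq (hden 1 0))) (Pden_neg (hden 0 0))
        · exact Pden_add hp (Pden_neg (Pden_mul hp hq (hden 1 1))) (Pden_neg (hden 0 1))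
      have hlt'' : ((M' : Matrix (Fin 2) (Fin 2) ℚ) 1 0).num.natAbs < N := by
        rw [hcoe]
        simp only [Matrix.cons_val', Matrix.cons_val_zero, Matrix.cons_val_one, Matrix.head_cons,
          Matrix.empty_val', Matrix.cons_val_fin_one, Matrix.head_fin_const, Matrix.of_apply]
        rw [show -((M : Matrix (Fin 2) (Fin 2) ℚ) 0 0 + q * (M : Matrix (Fin 2) (Fin 2) ℚ) 1 0) =
          -(((M : Matrix (Fin 2) (Fin 2) ℚ) 0 0) + q * ((M : Matrix (Fin 2) (Fin 2) ℚ) 1 0)) by ring,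
          Rat.num_neg_eq_neg_num, Int.natAbs_neg]
        omega
      have hmem : M' ∈ Hgrp p := ih M' hden' hlt''
      have hrec : M = (matQ q)⁻¹ * (matB⁻¹ * M') := by rw [hM']; group
      rw [hrec]
      exact mul_mem (inv_mem (hQall_mem p hp hq)) (mul_mem (inv_mem (hB_mem p hp)) hmem)

end Main

theorem stmt0 (p : ℕ) (hp : p.Prime) :
    matB = matA⁻¹ * (matQ (1/p))^p * matA⁻¹ ∧
    matU p (Nat.cast_ne_zero.mpr hp.ne_zero) =
      matB⁻¹ * matQ (1/p) * matA^(-(p:ℤ)) * matQ (1/p) ∧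
    ∀ M : SL2Q,
      (∀ i j, ∃ a : ℤ, ∃ n : ℕ, (M : Matrix (Fin 2) (Fin 2) ℚ) i j = (a : ℚ) / (p:ℚ)^n) →
        M ∈ Subgroup.closure {matA, matQ (1/p)} := by
  refine ⟨id1 p hp, id2 p hp, ?_⟩
  intro M hM
  exact main_mem p hp (((M : Matrix (Fin 2) (Fin 2) ℚ) 1 0).num.natAbs + 1) M hM
    (Nat.lt_succ_self _)
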